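/- arXiv:2308.15221 — 5 statements merged into one kernel-verified Lean document; each statement's English description precedes it below -/
import Mathlib

section
/- Let n and k be integers with 1 ≤ k ≤ n−2, and let λ and μ be partitions in the (k+1)×(n−k) box satisfying |λ| ≤ |μ| − k(n−k) + (k+1). Then it is NOT the case that λ ≤ μ if and only if either λ = (n−k, 0, …, 0) and μ = (n−k−1, n−k−1, …, n−k−1), or λ = (1, 1, …, 1) and μ = (n−k, …, n−k, 0). -/
/-- A partition in the `(k+1) × (n-k)` box: a weakly decreasing sequence
`λ_1 ≥ … ≥ λ_{k+1}` (indexed by `Fin (k+1)`) with all parts at most `n - k`. -/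
def IsBoxPartition (n k : ℕ) (lam : Fin (k + 1) → ℕ) : Prop :=
  (∀ i, lam i ≤ n - k) ∧ Antitone lam

private lemma sum_eq_const_of_le {N : ℕ} {s : Finset (Fin N)} {f : Fin N → ℕ} {c : ℕ}
    (hb : ∀ j ∈ s, f j ≤ c) (hs : s.card * c ≤ ∑ j ∈ s, f j) : ∀ j ∈ s, f j = c := by
  have h1 : ∑ j ∈ s, f j ≤ ∑ _j ∈ s, c := Finset.sum_le_sum hb
  rw [Finset.sum_const, smul_eq_mul] at h1
  have he : ∑ j ∈ s, f j = ∑ _j ∈ s, c := by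
    rw [Finset.sum_const, smul_eq_mul]; omega
  exact fun j hj => (Finset.sum_eq_sum_iff_of_le hb).mp he j hj

private lemma sum_eq_const_of_ge {N : ℕ} {s : Finset (Fin N)} {f : Fin N → ℕ} {c : ℕ}
    (hb : ∀ j ∈ s, c ≤ f j) (hs : ∑ j ∈ s, f j ≤ s.card * c) : ∀ j ∈ s, f j = c := by
  have he : ∑ _j ∈ s, c = ∑ j ∈ s, f j := by
    have h1 : ∑ _j ∈ s, c ≤ ∑ j ∈ s, f j := Finset.sum_le_sum hb
    rw [Finset.sum_const, smul_eq_mul] at h1 ⊢; omega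
  exact fun j hj => ((Finset.sum_eq_sum_iff_of_le hb).mp he j hj).symm

/-- Proposition 2.7: for partitions `λ, μ` in the `(k+1)×(n-k)` box with
`|λ| ≤ |μ| - k(n-k) + (k+1)`, one has `λ ≰ μ` iff
`λ = (n-k,0,…,0), μ = (n-k-1,…,n-k-1)` or `λ = (1,…,1), μ = (n-k,…,n-k,0)`. -/
theorem box_partition_not_le_iff (n k : ℕ) (hk : 1 ≤ k) (hkn : k + 2 ≤ n)
    (lam mu : Fin (k + 1) → ℕ)
    (hlam : IsBoxPartition n k lam) (hmu : IsBoxPartition n k mu)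
    (hcodim : (∑ i, lam i) + k * (n - k) ≤ (∑ i, mu i) + (k + 1)) :
    (¬ ∀ i, lam i ≤ mu i) ↔
      ((lam = fun i : Fin (k + 1) => if (i : ℕ) = 0 then n - k else 0) ∧
        (mu = fun _ => n - k - 1)) ∨
      ((lam = fun _ => 1) ∧
        (mu = fun i : Fin (k + 1) => if (i : ℕ) = k then 0 else n - k)) := by
  obtain ⟨hlb, hla⟩ := hlam
  obtain ⟨hmb, hma⟩ := hmu
  have hm2 : 2 ≤ n - k := by omega
  have hcard : (Finset.univ : Finset (Fin (k+1))).card = k + 1 := by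
    simp
  constructor
  · intro hne
    push_neg at hne
    obtain ⟨i, hi⟩ := hne
    by_cases h0 : (i : ℕ) = 0
    · -- case i = 0
      left
      have hi0 : i = 0 := Fin.ext h0
      rw [hi0] at hi
      have hmu0 : ∀ j, mu j ≤ mu 0 := fun j => hma (Fin.zero_le j)
      have hM : ∑ j, mu j ≤ (k + 1) * mu 0 := by
        calc ∑ j, mu j ≤ ∑ _j : Fin (k+1), mu 0 :=
              Finset.sum_le_sum fun j _ => hmu0 j
          _ = (k + 1) * mu 0 := by rw [Finset.sum_const, smul_eq_mul, hcard]
      have hL : lam 0 ≤ ∑ j, lam j :=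
        Finset.single_le_sum (fun j _ => Nat.zero_le _) (Finset.mem_univ 0)
      have hb : mu 0 + 1 ≤ lam 0 := hi
      have h1 : (k + 1) * (mu 0 + 1) ≤ (k + 1) * lam 0 := Nat.mul_le_mul_left _ hb
      have hexp : (k + 1) * lam 0 = lam 0 + k * lam 0 := by ring
      have hexp2 : (k + 1) * (mu 0 + 1) = (k + 1) * mu 0 + (k + 1) := by ring
      have h2 : (∑ j, lam j) + k * (n - k) ≤ (k + 1) * lam 0 := by linarith
      have h4 : n - k ≤ lam 0 := by
        have : k * (n - k) ≤ k * lam 0 := by linarith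
        exact Nat.le_of_mul_le_mul_left this hk
      have hlam0 : lam 0 = n - k := le_antisymm (hlb 0) h4
      have hsplit : (k + 1) * (n - k) = (k + 1) * (n - k - 1) + (k + 1) := by
        obtain ⟨c, hc⟩ : ∃ c, n - k = c + 1 := ⟨n - k - 1, by omega⟩
        have hc' : n - k - 1 = c := by omega
        rw [hc', hc]; ring
      have hexp3 : (k + 1) * (n - k) = (n - k) + k * (n - k) := by ring
      have hLle : ∑ j, lam j ≤ n - k := by
        rw [hlam0] at h2; linarith
      have hMge : (k + 1) * (n - k - 1) ≤ ∑ j, mu j := by linarith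
      constructor
      · funext j
        by_cases hj : (j : ℕ) = 0
        · have : j = 0 := Fin.ext hj
          rw [this, hlam0]; simp
        · simp only [hj, if_false]
          have hmem : j ∈ Finset.univ.erase 0 := by
            refine Finset.mem_erase.mpr ⟨?_, Finset.mem_univ j⟩
            exact fun h => hj (by rw [h]; rfl)
          have hsum : (∑ x ∈ Finset.univ.erase 0, lam x) + lam 0 = ∑ j, lam j :=
            Finset.sum_erase_add _ _ (Finset.mem_univ 0)
          have hzero : ∑ x ∈ Finset.univ.erase 0, lam x = 0 := by omega
          exact (Finset.sum_eq_zero_iff.mp hzero) j hmem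
      · funext j
        have hbnd : ∀ j' ∈ (Finset.univ : Finset (Fin (k+1))), mu j' ≤ n - k - 1 := by
          intro j' _
          have := hmu0 j'
          omega
        have := sum_eq_const_of_le hbnd (by rw [hcard]; exact hMge) j (Finset.mem_univ j)
        exact this
    · by_cases hik : (i : ℕ) = k
      · -- case i = k
        right
        have hil : i = Fin.last k := Fin.ext (by simp [hik])
        rw [hil] at hi
        have hlk : ∀ j, lam (Fin.last k) ≤ lam j := fun j => hla (Fin.le_last j)
        have hLge : (k + 1) * lam (Fin.last k) ≤ ∑ j, lam j := by
          calc (k + 1) * lam (Fin.last k)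
              = ∑ _j : Fin (k+1), lam (Fin.last k) := by
                rw [Finset.sum_const, smul_eq_mul, hcard]
            _ ≤ ∑ j, lam j := Finset.sum_le_sum fun j _ => hlk j
        have hcarderase : (Finset.univ.erase (Fin.last k)).card = k := by
          rw [Finset.card_erase_of_mem (Finset.mem_univ _), hcard]
          omega
        have hMeq : (∑ x ∈ Finset.univ.erase (Fin.last k), mu x) + mu (Fin.last k)
            = ∑ j, mu j := Finset.sum_erase_add _ _ (Finset.mem_univ _)
        have hMle : ∑ x ∈ Finset.univ.erase (Fin.last k), mu x ≤ k * (n - k) := by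
          calc ∑ x ∈ Finset.univ.erase (Fin.last k), mu x
              ≤ ∑ _x ∈ Finset.univ.erase (Fin.last k), (n - k) :=
                Finset.sum_le_sum fun j _ => hmb j
            _ = k * (n - k) := by rw [Finset.sum_const, smul_eq_mul, hcarderase]
        have hb : mu (Fin.last k) + 1 ≤ lam (Fin.last k) := hi
        have hexp : (k + 1) * lam (Fin.last k) = lam (Fin.last k) + k * lam (Fin.last k) := by
          ring
        have hka : k * lam (Fin.last k) ≤ k * 1 := by
          have h2 : (∑ j, lam j) + k * (n - k) ≤ k * (n - k) + mu (Fin.last k) + (k + 1) := by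
            linarith
          have h3 : (k + 1) * lam (Fin.last k) ≤ mu (Fin.last k) + k + 1 := by linarith
          have : lam (Fin.last k) + k * lam (Fin.last k) ≤ lam (Fin.last k) + k := by
            omega
          omega
        have ha1 : lam (Fin.last k) = 1 := by
          have := Nat.le_of_mul_le_mul_left hka hk
          omega
        have hmul : mu (Fin.last k) = 0 := by omega
        have hLle : ∑ j, lam j ≤ k + 1 := by
          have : (∑ j, lam j) + k * (n - k) ≤ k * (n - k) + 0 + (k + 1) := by linarith
          linarith
        have hlamconst : ∀ j ∈ (Finset.univ : Finset (Fin (k+1))), lam j = 1 := by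
          apply sum_eq_const_of_ge
          · intro j _; rw [← ha1]; exact hlk j
          · rw [hcard]; omega
        have hLeq : ∑ j, lam j = k + 1 := by
          calc ∑ j, lam j = ∑ _j : Fin (k+1), 1 :=
                Finset.sum_congr rfl hlamconst
            _ = k + 1 := by simp
        have hMge : k * (n - k) ≤ ∑ x ∈ Finset.univ.erase (Fin.last k), mu x := by omega
        have hmuconst : ∀ j ∈ Finset.univ.erase (Fin.last k), mu j = n - k :=
          sum_eq_const_of_le (fun j _ => hmb j) (by rw [hcarderase]; exact hMge)
        constructor
        · funext j; exact hlamconst j (Finset.mem_univ j)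
        · funext j
          by_cases hj : (j : ℕ) = k
          · have : j = Fin.last k := Fin.ext (by simp [hj])
            rw [this, hmul]; simp
          · simp only [hj, if_false]
            exact hmuconst j (Finset.mem_erase.mpr
              ⟨fun h => hj (by rw [h]; simp), Finset.mem_univ j⟩)
      · -- middle case: contradiction
        exfalso
        have hi1 : 1 ≤ (i : ℕ) := by omega
        have hik' : (i : ℕ) + 1 ≤ k := by
          have := i.isLt; omega
        -- lower bound on sum of lam
        have hA : ((i : ℕ) + 1) * lam i ≤ ∑ j, lam j := by
          calc ((i : ℕ) + 1) * lam i
              = ∑ _j ∈ Finset.Iic i, lam i := by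
                rw [Finset.sum_const, smul_eq_mul, Fin.card_Iic]
            _ ≤ ∑ j ∈ Finset.Iic i, lam j :=
                Finset.sum_le_sum fun j hj => hla (Finset.mem_Iic.mp hj)
            _ ≤ ∑ j, lam j :=
                Finset.sum_le_sum_of_subset (Finset.subset_univ _)
        -- upper bound on sum of mu
        have hcardIio : (Finset.Iio i).card = (i : ℕ) := Fin.card_Iio i
        have hcardcompl : ((Finset.Iio i)ᶜ : Finset (Fin (k+1))).card = k + 1 - (i : ℕ) := by
          rw [Finset.card_compl, hcardIio]; simp
        have hB : ∑ j, mu j ≤ (i : ℕ) * (n - k) + (k + 1 - (i : ℕ)) * mu i := by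
          have hsplit : (∑ j ∈ Finset.Iio i, mu j) + ∑ j ∈ (Finset.Iio i)ᶜ, mu j
              = ∑ j, mu j := Finset.sum_add_sum_compl _ _
          have h1 : ∑ j ∈ Finset.Iio i, mu j ≤ (i : ℕ) * (n - k) := by
            calc ∑ j ∈ Finset.Iio i, mu j ≤ ∑ _j ∈ Finset.Iio i, (n - k) :=
                  Finset.sum_le_sum fun j _ => hmb j
              _ = (i : ℕ) * (n - k) := by rw [Finset.sum_const, smul_eq_mul, hcardIio]
          have h2 : ∑ j ∈ (Finset.Iio i)ᶜ, mu j ≤ (k + 1 - (i : ℕ)) * mu i := by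
            calc ∑ j ∈ (Finset.Iio i)ᶜ, mu j ≤ ∑ _j ∈ (Finset.Iio i)ᶜ, mu i := by
                  refine Finset.sum_le_sum fun j hj => hma ?_
                  have := Finset.mem_compl.mp hj
                  rw [Finset.mem_Iio] at this
                  exact le_of_not_gt this
              _ = (k + 1 - (i : ℕ)) * mu i := by
                  rw [Finset.sum_const, smul_eq_mul, hcardcompl]
          omega
        -- cast to ℤ and derive contradiction
        have hcast : ((k + 1 - (i : ℕ) : ℕ) : ℤ) = (k : ℤ) + 1 - ((i : ℕ) : ℤ) := by
          have : (i : ℕ) ≤ k + 1 := by omega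
          push_cast [Nat.cast_sub this]
          ring
        have hbz : (mu i : ℤ) + 1 ≤ (lam i : ℤ) := by exact_mod_cast hi
        have haz : (lam i : ℤ) ≤ ((n - k : ℕ) : ℤ) := by exact_mod_cast hlb i
        have hmz : (2 : ℤ) ≤ ((n - k : ℕ) : ℤ) := by exact_mod_cast hm2
        have hAz : (((i : ℕ) : ℤ) + 1) * (lam i : ℤ) ≤ ((∑ j, lam j : ℕ) : ℤ) := by
          exact_mod_cast hA
        have hBz : ((∑ j, mu j : ℕ) : ℤ) ≤ ((i : ℕ) : ℤ) * ((n - k : ℕ) : ℤ)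
            + ((k : ℤ) + 1 - ((i : ℕ) : ℤ)) * (mu i : ℤ) := by
          have := hB
          zify at this
          rw [hcast] at this
          exact_mod_cast this
        have hCz : ((∑ j, lam j : ℕ) : ℤ) + (k : ℤ) * ((n - k : ℕ) : ℤ)
            ≤ ((∑ j, mu j : ℕ) : ℤ) + (k : ℤ) + 1 := by
          exact_mod_cast hcodim
        have hi1z : (1 : ℤ) ≤ ((i : ℕ) : ℤ) := by exact_mod_cast hi1
        have hikz : ((i : ℕ) : ℤ) + 1 ≤ (k : ℤ) := by exact_mod_cast hik'
        nlinarith [mul_nonneg (by linarith : (0:ℤ) ≤ ((n - k : ℕ) : ℤ) - (lam i : ℤ))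
            (by linarith : (0:ℤ) ≤ (k : ℤ) - ((i : ℕ) : ℤ) - 1),
          mul_nonneg (by linarith : (0:ℤ) ≤ (lam i : ℤ) - 1)
            (by linarith : (0:ℤ) ≤ ((i : ℕ) : ℤ) - 1),
          mul_le_mul_of_nonneg_left hbz
            (by linarith : (0:ℤ) ≤ (k : ℤ) + 1 - ((i : ℕ) : ℤ))]
  · rintro (⟨hl, hm⟩ | ⟨hl, hm⟩) h
    · have := h 0
      rw [hl, hm] at this
      simp at this
      omega
    · have := h (Fin.last k)
      rw [hl, hm] at this
      simp at this
end

section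
/- Let n and k be integers with 1 ≤ k ≤ n−2, and let λ and μ be partitions in the (k+1)×(n−k) box satisfying |λ| ≤ |μ| − k(n−k) + (k+1). If there exists an index i with 1 ≤ i ≤ k+1 such that λ_i > μ_i, then either λ = (n−k, 0, …, 0) and μ = (n−k−1, n−k−1, …, n−k−1), or λ = (1, 1, …, 1) and μ = (n−k, …, n−k, 0). -/
private lemma sum_ite_lt_const (N t x y : ℕ) (ht : t ≤ N) :
    ∑ j ∈ Finset.range N, (if j < t then x else y) = t * x + (N - t) * y := by
  rw [Finset.range_eq_Ico, ← Finset.sum_Ico_consecutive _ (Nat.zero_le t) ht]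
  have h1 : ∑ j ∈ Finset.Ico 0 t, (if j < t then x else y) = t * x := by
    rw [Finset.sum_congr rfl fun j hj => if_pos (Finset.mem_Ico.mp hj).2]
    simp [Nat.card_Ico, mul_comm]
  have h2 : ∑ j ∈ Finset.Ico t N, (if j < t then x else y) = (N - t) * y := by
    rw [Finset.sum_congr rfl fun j hj =>
      if_neg (by have := (Finset.mem_Ico.mp hj).1; omega)]
    simp [Nat.card_Ico, mul_comm]
  rw [h1, h2]

/-- If `|λ| ≤ |μ| - k(n-k) + (k+1)` and `λ_i > μ_i` for some `i`, then
`λ = (n-k,0,…,0), μ = (n-k-1,…,n-k-1)` or `λ = (1,…,1), μ = (n-k,…,n-k,0)`. -/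
theorem box_partition_exists_gt (n k : ℕ) (hk : 1 ≤ k) (hkn : k + 2 ≤ n)
    (lam mu : Fin (k + 1) → ℕ)
    (hlam : IsBoxPartition n k lam) (hmu : IsBoxPartition n k mu)
    (hcodim : (∑ i, lam i) + k * (n - k) ≤ (∑ i, mu i) + (k + 1))
    (hgt : ∃ i, mu i < lam i) :
    ((lam = fun i : Fin (k + 1) => if (i : ℕ) = 0 then n - k else 0) ∧
      (mu = fun _ => n - k - 1)) ∨
    ((lam = fun _ => 1) ∧
      (mu = fun i : Fin (k + 1) => if (i : ℕ) = k then 0 else n - k)) := by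
  obtain ⟨hlb, hlA⟩ := hlam
  obtain ⟨hmb, hmA⟩ := hmu
  obtain ⟨i, hi⟩ := hgt
  set m := n - k with hmdef
  have hm2 : 2 ≤ m := by omega
  have ha1 : 1 ≤ lam i := by omega
  have ham : lam i ≤ m := hlb i
  have hik : (i : ℕ) ≤ k := by omega
  -- upper bound on Σ μ
  have hSmu : (∑ j, mu j) ≤ (i : ℕ) * m + (k + 1 - (i : ℕ)) * (lam i - 1) := by
    calc (∑ j, mu j)
        ≤ ∑ j : Fin (k+1), (if (j : ℕ) < (i : ℕ) then m else lam i - 1) := by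
          apply Finset.sum_le_sum
          intro j _
          by_cases h : (j : ℕ) < (i : ℕ)
          · rw [if_pos h]; exact hmb j
          · rw [if_neg h]
            have : mu j ≤ mu i := hmA (Fin.le_def.mpr (by omega))
            omega
      _ = ∑ j ∈ Finset.range (k+1), (if j < (i : ℕ) then m else lam i - 1) :=
          Fin.sum_univ_eq_sum_range (fun j => if j < (i : ℕ) then m else lam i - 1) (k+1)
      _ = (i : ℕ) * m + (k + 1 - (i : ℕ)) * (lam i - 1) :=
          sum_ite_lt_const _ _ _ _ (by omega)
  -- lower bound on Σ λ
  have hSlb : ((i : ℕ) + 1) * lam i ≤ ∑ j, lam j := by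
    calc ((i : ℕ) + 1) * lam i
        = ((i : ℕ) + 1) * lam i + (k + 1 - ((i : ℕ) + 1)) * 0 := by ring
      _ = ∑ j ∈ Finset.range (k+1), (if j < (i : ℕ) + 1 then lam i else 0) :=
          (sum_ite_lt_const _ _ _ _ (by omega)).symm
      _ = ∑ j : Fin (k+1), (if (j : ℕ) < (i : ℕ) + 1 then lam i else 0) :=
          (Fin.sum_univ_eq_sum_range (fun j => if j < (i : ℕ) + 1 then lam i else 0) (k+1)).symm
      _ ≤ ∑ j, lam j := by
          apply Finset.sum_le_sum
          intro j _
          by_cases h : (j : ℕ) < (i : ℕ) + 1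
          · rw [if_pos h]; exact hlA (Fin.le_def.mpr (by omega))
          · rw [if_neg h]; exact Nat.zero_le _
  have key : ((i : ℕ) + 1) * lam i + k * m
      ≤ (i : ℕ) * m + (k + 1 - (i : ℕ)) * (lam i - 1) + (k + 1) := by
    calc ((i : ℕ) + 1) * lam i + k * m ≤ (∑ j, lam j) + k * m :=
          Nat.add_le_add_right hSlb _
      _ ≤ (∑ j, mu j) + (k + 1) := hcodim
      _ ≤ _ := Nat.add_le_add_right hSmu _
  rcases Nat.lt_or_ge 0 (i : ℕ) with hipos | hi0
  rcases Nat.lt_or_ge (i : ℕ) k with hiltk | hige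
  · -- middle case: contradiction
    exfalso
    zify [ha1, show (i : ℕ) ≤ k + 1 by omega] at key
    have hamZ : (lam i : ℤ) ≤ m := by exact_mod_cast ham
    have ha1Z : (1 : ℤ) ≤ lam i := by exact_mod_cast ha1
    rcases lt_or_eq_of_le hamZ with hlt | heq
    · nlinarith [key, mul_pos (show (0:ℤ) < (k : ℤ) - ((i:ℕ):ℤ) by omega)
          (show (0:ℤ) < (m : ℤ) - lam i by linarith),
        mul_nonneg (show (0:ℤ) ≤ ((i : ℕ) : ℤ) by positivity)
          (show (0:ℤ) ≤ (lam i : ℤ) - 1 by linarith)]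
    · have ha2 : (2:ℤ) ≤ lam i := by
        rw [heq]; exact_mod_cast hm2
      nlinarith [key, mul_pos (show (0:ℤ) < ((i : ℕ) : ℤ) by omega)
          (show (0:ℤ) < (lam i : ℤ) - 1 by linarith),
        mul_nonneg (show (0:ℤ) ≤ (k:ℤ) - (i : ℕ) by exact_mod_cast by omega)
          (show (0:ℤ) ≤ (m:ℤ) - lam i by linarith)]
  · -- case i = k : second alternative
    have hivk : (i : ℕ) = k := by omega
    -- lam i = 1
    have ha : lam i = 1 := by
      rw [hivk] at key
      have hkk : k + 1 - k = 1 := by omega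
      rw [hkk, one_mul] at key
      -- (k+1) * a + k*m ≤ k*m + (a - 1) + (k+1)
      have he : (k + 1) * lam i = k * lam i + lam i := by ring
      rw [he] at key
      by_contra hcon
      have h2 : 2 ≤ lam i := by omega
      have := Nat.mul_le_mul (le_refl k) h2
      omega
    have hmui : mu i = 0 := by omega
    have hlge : ∀ j, 1 ≤ lam j := by
      intro j
      have : lam i ≤ lam j := hlA (Fin.le_def.mpr (by omega))
      omega
    have hiu : i ∈ (Finset.univ : Finset (Fin (k+1))) := Finset.mem_univ i
    have hcardE : (Finset.univ.erase i : Finset (Fin (k+1))).card = k := by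
      rw [Finset.card_erase_of_mem hiu, Finset.card_univ, Fintype.card_fin]
      omega
    have hSm_le : (∑ j, mu j) ≤ k * m := by
      have hsplit := Finset.sum_erase_add Finset.univ mu hiu
      have : (∑ j ∈ Finset.univ.erase i, mu j) ≤ k * m := by
        calc (∑ j ∈ Finset.univ.erase i, mu j)
            ≤ (Finset.univ.erase i).card • m :=
              Finset.sum_le_card_nsmul _ _ _ (fun x _ => hmb x)
          _ = k * m := by rw [hcardE, smul_eq_mul]
      omega
    have hSl_le : (∑ j, lam j) ≤ k + 1 := by linarith
    have hlall : ∀ j, lam j = 1 := by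
      intro j
      have hju : j ∈ (Finset.univ : Finset (Fin (k+1))) := Finset.mem_univ j
      have hsplit := Finset.sum_erase_add Finset.univ lam hju
      have hge : k ≤ ∑ x ∈ Finset.univ.erase j, lam x := by
        have h := Finset.card_nsmul_le_sum (Finset.univ.erase j) (fun x => lam x) 1
          (fun x _ => hlge x)
        rw [Finset.card_erase_of_mem hju, Finset.card_univ, Fintype.card_fin,
          smul_eq_mul] at h
        omega
      have := hlge j
      omega
    have hSl_eq : (∑ j, lam j) = k + 1 := by
      rw [Finset.sum_congr rfl (fun x _ => hlall x)]
      simp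
    have hSm_ge : k * m ≤ ∑ j, mu j := by omega
    have hmuall : ∀ j, j ≠ i → mu j = m := by
      intro j hj
      have hju : j ∈ (Finset.univ : Finset (Fin (k+1))) := Finset.mem_univ j
      have hsplit := Finset.sum_erase_add Finset.univ mu hju
      have hiE : i ∈ Finset.univ.erase j := Finset.mem_erase.mpr ⟨(Ne.symm hj), hiu⟩
      have hsplit2 := Finset.sum_erase_add (Finset.univ.erase j) mu hiE
      have hb : (∑ x ∈ (Finset.univ.erase j).erase i, mu x) ≤ (k - 1) * m := by
        calc (∑ x ∈ (Finset.univ.erase j).erase i, mu x)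
            ≤ ((Finset.univ.erase j).erase i).card • m :=
              Finset.sum_le_card_nsmul _ _ _ (fun x _ => hmb x)
          _ = (k - 1) * m := by
              rw [Finset.card_erase_of_mem hiE, Finset.card_erase_of_mem hju,
                Finset.card_univ, Fintype.card_fin, smul_eq_mul]
              congr 1 <;> omega
      have hkm : (k - 1) * m + m = k * m := by
        have h1 : k - 1 + 1 = k := by omega
        calc (k - 1) * m + m = ((k - 1) + 1) * m := by ring
          _ = k * m := by rw [h1]
      have := hmb j
      omega
    right
    constructor
    · funext x; exact hlall x
    · funext x
      by_cases h : (x : ℕ) = k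
      · have hx : x = i := Fin.ext (by omega)
        simp [hx, hmui, hivk]
      · rw [if_neg h]
        exact hmuall x (fun he => h (by rw [he, hivk]))
  · -- case i = 0 : first alternative
    have hiv0 : (i : ℕ) = 0 := by omega
    have ha : lam i = m := by
      have h0 : (i : ℕ) * m = 0 := by rw [hiv0]; ring
      have h1 : ((i : ℕ) + 1) * lam i = lam i := by rw [hiv0]; ring
      have h2 : k + 1 - (i : ℕ) = k + 1 := by omega
      have h3 : (k + 1 - (i : ℕ)) * (lam i - 1) = (k + 1) * (lam i - 1) := by
        rw [h2]
      have he : (k + 1) * (lam i - 1) + (k + 1) = (k + 1) * lam i := by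
        have h4 : lam i - 1 + 1 = lam i := by omega
        calc (k + 1) * (lam i - 1) + (k + 1)
            = (k + 1) * ((lam i - 1) + 1) := by ring
          _ = (k + 1) * lam i := by rw [h4]
      have he2 : (k + 1) * lam i = k * lam i + lam i := by ring
      have hle : k * m ≤ k * lam i := by linarith [key, h0, h1, h3, he, he2]
      have := Nat.le_of_mul_le_mul_left hle (by omega : 0 < k)
      omega
    have hieq : i = 0 := by apply Fin.ext; simp [hiv0]
    have hmu_le : ∀ j, mu j ≤ m - 1 := by
      intro j
      have : mu j ≤ mu i := hmA (Fin.le_def.mpr (by omega))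
      omega
    have hSm_le : (∑ j, mu j) ≤ (k + 1) * (m - 1) := by
      calc (∑ j, mu j) ≤ (Finset.univ : Finset (Fin (k+1))).card • (m - 1) :=
            Finset.sum_le_card_nsmul _ _ _ (fun x _ => hmu_le x)
        _ = (k + 1) * (m - 1) := by
            rw [Finset.card_univ, Fintype.card_fin, smul_eq_mul]
    have hkm : (k + 1) * (m - 1) + (k + 1) = k * m + m := by
      have h1 : m - 1 + 1 = m := by omega
      calc (k + 1) * (m - 1) + (k + 1) = (k + 1) * ((m - 1) + 1) := by ring
        _ = (k + 1) * m := by rw [h1]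
        _ = k * m + m := by ring
    have hSl_le : (∑ j, lam j) ≤ m := by omega
    have hlam0 : lam 0 = m := by rw [← hieq]; exact ha
    have hSl_ge : m ≤ ∑ j, lam j := by
      rw [← hlam0]
      exact Finset.single_le_sum (f := lam) (fun x _ => Nat.zero_le _)
        (Finset.mem_univ 0)
    have hlall : ∀ x : Fin (k+1), x ≠ 0 → lam x = 0 := by
      intro x hx
      have hpair : lam 0 + lam x ≤ ∑ j, lam j := by
        calc lam 0 + lam x = ∑ j ∈ ({0, x} : Finset (Fin (k+1))), lam j :=
              (Finset.sum_pair (Ne.symm hx)).symm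
          _ ≤ ∑ j, lam j :=
              Finset.sum_le_sum_of_subset (Finset.subset_univ _)
      omega
    have hSm_ge : (k + 1) * (m - 1) ≤ ∑ j, mu j := by omega
    have hmuall : ∀ j, mu j = m - 1 := by
      intro j
      by_contra h
      have hjlt : mu j < m - 1 := by have := hmu_le j; omega
      have : (∑ x, mu x) < ∑ _x : Fin (k+1), (m - 1) :=
        Finset.sum_lt_sum (fun x _ => hmu_le x) ⟨j, Finset.mem_univ j, hjlt⟩
      rw [Finset.sum_const, Finset.card_univ, Fintype.card_fin, smul_eq_mul] at this
      omega
    left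
    constructor
    · funext x
      by_cases h : (x : ℕ) = 0
      · have hx : x = 0 := by apply Fin.ext; simp [h]
        simp [hx, h, hlam0]
      · rw [if_neg h]
        exact hlall x (fun he => h (by rw [he]; rfl))
    · funext x; exact hmuall x
end

section
/- Let n and k be integers with 1 ≤ k ≤ n−2, and let λ and μ be partitions in the (k+1)×(n−k) box satisfying |λ| ≤ |μ| − k(n−k) + (k+1). If λ_1 > μ_1, then λ_1 = μ_1 + 1 and λ_j = 0 for every j with 2 ≤ j ≤ k+1. -/
/-- If `|λ| ≤ |μ| - k(n-k) + (k+1)` and `λ_1 > μ_1`, then `λ_1 = μ_1 + 1` and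
all parts `λ_j` with `j ≥ 2` vanish. -/
theorem box_partition_first_part_gt_aux (n k : ℕ) (hk : 1 ≤ k) (hkn : k + 2 ≤ n)
    (lam mu : Fin (k + 1) → ℕ)
    (hlam : IsBoxPartition n k lam) (hmu : IsBoxPartition n k mu)
    (hcodim : (∑ i, lam i) + k * (n - k) ≤ (∑ i, mu i) + (k + 1))
    (hgt : mu 0 < lam 0) :
    lam 0 = mu 0 + 1 ∧ ∀ j : Fin (k + 1), 1 ≤ (j : ℕ) → lam j = 0 := by
  obtain ⟨hlb, hla⟩ := hlam
  obtain ⟨hmb, hma⟩ := hmu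
  set M := n - k with hM
  have hl0 : lam 0 ≤ M := hlb 0
  have hsum_mu : (∑ i, mu i) ≤ (k + 1) * mu 0 := by
    calc (∑ i, mu i) ≤ ∑ _i : Fin (k + 1), mu 0 :=
          Finset.sum_le_sum fun i _ => hma (Fin.zero_le i)
      _ = (k + 1) * mu 0 := by simp [Finset.sum_const, mul_comm]
  have hsum_lam : (∑ i, lam i) = lam 0 + ∑ i : Fin k, lam i.succ :=
    Fin.sum_univ_succ lam
  set T := ∑ i : Fin k, lam i.succ with hT
  have key : lam 0 + T + k * M ≤ (k + 1) * (mu 0 + 1) := by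
    rw [hsum_lam] at hcodim
    have : (k + 1) * (mu 0 + 1) = (k + 1) * mu 0 + (k + 1) := by ring
    omega
  have h1 : mu 0 + 1 ≤ lam 0 := hgt
  have e1 : (k + 1) * (mu 0 + 1) ≤ (k + 1) * lam 0 := Nat.mul_le_mul_left _ h1
  have e2 : k * lam 0 ≤ k * M := Nat.mul_le_mul_left _ hl0
  have e3 : (k + 1) * lam 0 = lam 0 + k * lam 0 := by ring
  have hT0 : T = 0 := by linarith
  have hab : k * M ≤ k * lam 0 := by linarith
  have hMl : M ≤ lam 0 := Nat.le_of_mul_le_mul_left hab hk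
  have hl0M : lam 0 = M := le_antisymm hl0 hMl
  have e4 : (k + 1) * M ≤ (k + 1) * (mu 0 + 1) := by
    have : (k + 1) * M = M + k * M := by ring
    linarith [key, hT0, hl0M]
  have hMm : M ≤ mu 0 + 1 := Nat.le_of_mul_le_mul_left e4 (Nat.succ_pos k)
  have hfirst : lam 0 = mu 0 + 1 := by omega
  refine ⟨hfirst, fun j hj => ?_⟩
  have hall : ∀ i : Fin k, lam i.succ = 0 := by
    intro i
    have := (Finset.sum_eq_zero_iff.mp hT0.symm.symm) i (Finset.mem_univ i)
    exact this
  cases j using Fin.cases with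
  | zero => simp at hj
  | succ i => exact hall i
end

section
/- Let n and k be integers with 1 ≤ k ≤ n−2, and let λ and μ be partitions in the (k+1)×(n−k) box satisfying |λ| ≤ |μ| − k(n−k) + (k+1). If there exists an integer h with 1 ≤ h ≤ k such that λ_{h+1} > μ_{h+1}, then λ = (1, 1, …, 1) and μ = (n−k, …, n−k, 0). -/
lemma aux_sum_le {N : ℕ} (f : Fin N → ℕ) (hf : Antitone f) (m : ℕ)
    (hb : ∀ i, f i ≤ m) (h : ℕ) (hh : h < N) :
    ∑ i, f i ≤ h * m + (N - h) * f ⟨h, hh⟩ := by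
  have : ∑ i, f i ≤ ∑ i : Fin N, (if (i : ℕ) < h then m else f ⟨h, hh⟩) := by
    apply Finset.sum_le_sum
    intro i _
    by_cases hi : (i : ℕ) < h
    · simp [hi, hb i]
    · simp only [hi, if_false]
      exact hf (by simp [Fin.le_def]; omega)
  refine this.trans ?_
  rw [Finset.sum_ite, Finset.sum_const, Finset.sum_const]
  have h1 : (Finset.univ.filter fun i : Fin N => (i : ℕ) < h) = Finset.Iio ⟨h, hh⟩ := by
    ext i; simp [Fin.lt_def]
  have h2 : (Finset.univ.filter fun i : Fin N => ¬ (i : ℕ) < h) = Finset.Ici ⟨h, hh⟩ := by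
    ext i; simp [Fin.le_def]
  rw [h1, h2, Fin.card_Iio, Fin.card_Ici]
  simp [Nat.smul_one_eq_cast, smul_eq_mul]

lemma aux_sum_ge {N : ℕ} (f : Fin N → ℕ) (hf : Antitone f) (h : ℕ) (hh : h < N) :
    (h + 1) * f ⟨h, hh⟩ ≤ ∑ i, f i := by
  have : ∑ i ∈ Finset.Iio (⟨h, hh⟩ : Fin N) ∪ {⟨h, hh⟩}, f ⟨h, hh⟩ ≤ ∑ i ∈ Finset.Iio (⟨h, hh⟩ : Fin N) ∪ {⟨h, hh⟩}, f i := by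
    apply Finset.sum_le_sum
    intro i hi
    apply hf
    rcases Finset.mem_union.mp hi with hi | hi
    · exact le_of_lt (Finset.mem_Iio.mp hi)
    · exact le_of_eq (Finset.mem_singleton.mp hi)
  calc (h + 1) * f ⟨h, hh⟩ = ∑ i ∈ Finset.Iio (⟨h, hh⟩ : Fin N) ∪ {⟨h, hh⟩}, f ⟨h, hh⟩ := by
        rw [Finset.sum_const, Finset.card_union_of_disjoint (by simp), Fin.card_Iio]
        simp [smul_eq_mul, Nat.add_comm, Nat.mul_comm]
      _ ≤ ∑ i ∈ Finset.Iio (⟨h, hh⟩ : Fin N) ∪ {⟨h, hh⟩}, f i := this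
      _ ≤ ∑ i, f i := Finset.sum_le_sum_of_subset (Finset.subset_univ _)



/-- The case `h > 0` of Proposition 2.7: if `|λ| ≤ |μ| - k(n-k) + (k+1)` and
`λ_{h+1} > μ_{h+1}` for some `1 ≤ h ≤ k`, then `λ = (1,…,1)` and
`μ = (n-k,…,n-k,0)`. -/
theorem box_partition_later_part_gt (n k : ℕ) (hk : 1 ≤ k) (hkn : k + 2 ≤ n)
    (lam mu : Fin (k + 1) → ℕ)
    (hlam : IsBoxPartition n k lam) (hmu : IsBoxPartition n k mu)
    (hcodim : (∑ i, lam i) + k * (n - k) ≤ (∑ i, mu i) + (k + 1))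
    (h : ℕ) (hh1 : 1 ≤ h) (hhk : h ≤ k)
    (hgt : mu ⟨h, by omega⟩ < lam ⟨h, by omega⟩) :
    (lam = fun _ => 1) ∧
      (mu = fun i : Fin (k + 1) => if (i : ℕ) = k then 0 else n - k) := by

  obtain ⟨hlb, hla⟩ := hlam
  obtain ⟨hmb, hma⟩ := hmu
  set m := n - k with hm
  have hm2 : 2 ≤ m := by omega
  have hhN : h < k + 1 := by omega
  set A := lam ⟨h, hhN⟩ with hA
  set B := mu ⟨h, hhN⟩ with hB
  have hAm : A ≤ m := hlb _
  have hBA : B + 1 ≤ A := hgt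
  have s1 : ∑ i, mu i ≤ h * m + (k + 1 - h) * B := aux_sum_le mu hma m hmb h hhN
  have s2 : (h + 1) * A ≤ ∑ i, lam i := aux_sum_ge lam hla h hhN
  have key : (h + 1) * (B + 1) + k * m ≤ h * m + (k + 1 - h) * B + (k + 1) := by
    calc (h + 1) * (B + 1) + k * m ≤ (h + 1) * A + k * m := by
          exact Nat.add_le_add_right (Nat.mul_le_mul_left _ hBA) _
      _ ≤ (∑ i, lam i) + k * m := Nat.add_le_add_right s2 _
      _ ≤ (∑ i, mu i) + (k + 1) := hcodim
      _ ≤ h * m + (k + 1 - h) * B + (k + 1) := Nat.add_le_add_right s1 _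
  -- first show h = k
  have heqk : h = k := by
    by_contra hne
    have hhk' : h + 1 ≤ k := by omega
    have hBm : B + 1 ≤ m := le_trans hBA hAm
    have key' : ((h : ℤ) + 1) * (B + 1) + k * m ≤ h * m + ((k : ℤ) + 1 - h) * B + (k + 1) := by
      have := key
      zify [show h ≤ k + 1 by omega] at this
      linarith
    have h1 : (0 : ℤ) ≤ ((k : ℤ) - h - 1) * ((m : ℤ) - 1 - B) := by
      apply mul_nonneg <;> omega
    have h2 : (0 : ℤ) ≤ ((h : ℤ) - 1) * B := by
      apply mul_nonneg <;> omega
    have hm2' : (2 : ℤ) ≤ m := by exact_mod_cast hm2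
    nlinarith [key', h1, h2, hm2']
  subst heqk
  -- B = 0
  have hB0 : B = 0 := by
    have : (h + 1 - h) = 1 := by omega
    rw [this] at key
    nlinarith [key]
  -- sums
  have slam_ge : (h + 1) * 1 ≤ ∑ i, lam i := by
    refine le_trans ?_ s2
    exact Nat.mul_le_mul_left _ (by omega)
  have smu_le : ∑ i, mu i ≤ h * m := by
    have := s1
    rw [hB0] at this
    simpa using this
  have hsl : ∑ i, lam i = h + 1 := by
    have := hcodim
    omega
  have hsm : ∑ i, mu i = h * m := by
    have := hcodim
    omega
  have hone : ∀ i : Fin (h + 1), 1 ≤ lam i := by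
    intro i
    refine le_trans (by omega) (hla (show i ≤ ⟨h, hhN⟩ from ?_))
    simp [Fin.le_def]; omega
  constructor
  · funext i
    have hrest : h ≤ ∑ j ∈ Finset.univ.erase i, lam j := by
      have := Finset.card_nsmul_le_sum (Finset.univ.erase i) lam 1 (fun j _ => hone j)
      simpa [Finset.card_erase_of_mem, smul_eq_mul] using this
    have hsplit : lam i + ∑ j ∈ Finset.univ.erase i, lam j = ∑ j, lam j :=
      Finset.add_sum_erase _ _ (Finset.mem_univ i)
    have := hone i
    omega
  · have hmuk : mu ⟨h, hhN⟩ = 0 := hB0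
    funext i
    by_cases hik : (i : ℕ) = h
    · have : i = ⟨h, hhN⟩ := Fin.ext hik
      rw [this, hmuk]
      simp [hik]
    · have hine : i ≠ ⟨h, hhN⟩ := fun hc => hik (by rw [hc])
      have hkmem : (⟨h, hhN⟩ : Fin (h + 1)) ∈ Finset.univ.erase i :=
        Finset.mem_erase.mpr ⟨fun hc => hine hc.symm, Finset.mem_univ _⟩
      have hrest : ∑ j ∈ (Finset.univ.erase i).erase ⟨h, hhN⟩, mu j ≤ (h - 1) * m := by
        calc ∑ j ∈ (Finset.univ.erase i).erase ⟨h, hhN⟩, mu j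
            ≤ ∑ _j ∈ (Finset.univ.erase i).erase ⟨h, hhN⟩, m :=
              Finset.sum_le_sum fun j _ => hmb j
          _ = (h - 1) * m := by
              rw [Finset.sum_const, smul_eq_mul,
                Finset.card_erase_of_mem hkmem, Finset.card_erase_of_mem (Finset.mem_univ i)]
              simp
    
      have hsplit1 : mu i + ∑ j ∈ Finset.univ.erase i, mu j = ∑ j, mu j :=
        Finset.add_sum_erase _ _ (Finset.mem_univ i)
      have hsplit2 : mu ⟨h, hhN⟩ + ∑ j ∈ (Finset.univ.erase i).erase ⟨h, hhN⟩, mu j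
          = ∑ j ∈ Finset.univ.erase i, mu j :=
        Finset.add_sum_erase _ _ hkmem
      have hmul : (h - 1) * m + m = h * m := by
        have h1 : h - 1 + 1 = h := by omega
        calc (h - 1) * m + m = (h - 1 + 1) * m := by ring
          _ = h * m := by rw [h1]
      have hmi : mu i ≤ m := hmb i
      simp only [hik, if_false]
      omega
end

section
/- Let n and k be integers with 1 ≤ k ≤ n−2, and let α and β be partitions in the (k+1)×(n−k) box satisfying ((k+1)(n−k) − |α|) + ((k+1)(n−k) − |β|) ≤ n+1 (i.e., the sum of the codimensions of the corresponding Schubert varieties in the Grassmannian G(k,n) is at most n+1). Then α∨ ≤ β fails if and only if the unordered pair {α, β} equals {(n−k−1, …, n−k−1), (n−k, …, n−k, 0)}, where (n−k−1, …, n−k−1) has all k+1 parts equal to n−k−1 and (n−k, …, n−k, 0) has the first k parts equal to n−k and the last part 0. (This is the combinatorial form, via the Richardson nonvanishing criterion for products of Schubert classes, of the statement that the only Schubert md-pair in G(k,n) is {[X_H],[X_p]}.) -/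
/-- The dual partition `λ∨`, given (1-based) by `(λ∨)_j = n - k - λ_{k+2-j}`. -/
def boxDual (n k : ℕ) (lam : Fin (k + 1) → ℕ) : Fin (k + 1) → ℕ :=
  fun j => (n - k) - lam ⟨k - (j : ℕ), Nat.lt_succ_of_le (Nat.sub_le k j)⟩

lemma sum_le_aux {N : ℕ} (m : ℕ) (lam : Fin N → ℕ)
    (hb : ∀ t, lam t ≤ m) (hmono : Antitone lam) (c : ℕ) (hc : c < N) :
    ∑ t, lam t ≤ c * m + (N - c) * lam ⟨c, hc⟩ := by
  have h1 : ∑ t, lam t ≤ ∑ t : Fin N, (if (t : ℕ) < c then m else lam ⟨c, hc⟩) := by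
    apply Finset.sum_le_sum
    intro t _
    by_cases h : (t : ℕ) < c
    · simpa [h] using hb t
    · simp only [h, if_false]
      exact hmono (show (⟨c, hc⟩ : Fin N) ≤ t from by
        simpa [Fin.le_def] using Nat.le_of_not_lt h)
  have h2 : ∑ t : Fin N, (if (t : ℕ) < c then m else lam ⟨c, hc⟩)
      = c * m + (N - c) * lam ⟨c, hc⟩ := by
    rw [Fin.sum_univ_eq_sum_range (fun t => if t < c then m else lam ⟨c, hc⟩) N]
    rw [Finset.range_eq_Ico, ← Finset.sum_Ico_consecutive _ (Nat.zero_le c) (Nat.le_of_lt hc)]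
    have e1 : ∑ t ∈ Finset.Ico 0 c, (if t < c then m else lam ⟨c, hc⟩) = c * m := by
      rw [Finset.sum_congr rfl (fun t ht => if_pos (Finset.mem_Ico.mp ht).2)]
      simp [Nat.card_Ico, mul_comm]
    have e2 : ∑ t ∈ Finset.Ico c N, (if t < c then m else lam ⟨c, hc⟩)
        = (N - c) * lam ⟨c, hc⟩ := by
      rw [Finset.sum_congr rfl (fun t ht => if_neg (Nat.not_lt.mpr (Finset.mem_Ico.mp ht).1))]
      simp [Nat.card_Ico]
    rw [e1, e2]
  exact le_trans h1 (le_of_eq h2)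

lemma all_eq_of_sum {ι : Type*} (s : Finset ι) (f : ι → ℕ) (c : ℕ)
    (hle : ∀ t ∈ s, f t ≤ c) (hsum : s.card * c ≤ ∑ t ∈ s, f t) :
    ∀ t ∈ s, f t = c := by
  intro t ht
  by_contra hne
  have hlt : f t < c := lt_of_le_of_ne (hle t ht) hne
  have h : ∑ x ∈ s, f x < ∑ x ∈ s, (fun _ => c) x :=
    Finset.sum_lt_sum hle ⟨t, ht, hlt⟩
  simp only [Finset.sum_const, smul_eq_mul] at h
  omega

lemma nat_prod_aux (a j : ℕ) (ha : 1 ≤ a) (hj : 1 ≤ j) : a + j ≤ a * j + 1 := by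
  obtain ⟨a', rfl⟩ := Nat.exists_eq_add_of_le ha
  obtain ⟨j', rfl⟩ := Nat.exists_eq_add_of_le hj
  nlinarith [Nat.zero_le (a' * j')]

lemma dichotomy_aux (k m1 i jv A B Sa Sb a b : ℕ) (hij : i + jv = k)
    (hi1 : 1 ≤ i) (hjv1 : 1 ≤ jv)
    (h1 : Sa ≤ i*(m1+2) + (jv+1)*A) (h2 : Sb ≤ jv*(m1+2) + (i+1)*B)
    (h3 : 2*((k+1)*(m1+2)) ≤ k+(m1+2)+1+(Sa+Sb))
    (hAa : A + a = m1+2) (hBb : B + b = m1+2) (hABlt : A+B < m1+2) : False := by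
  have ha1 : 1 ≤ a := by omega
  have hb1 : 1 ≤ b := by omega
  have hab : (m1+2)+1 ≤ a + b := by omega
  have e1 : (jv+1)*A + (jv+1)*a = (jv+1)*(m1+2) := by
    rw [← Nat.mul_add, hAa]
  have e2 : (i+1)*B + (i+1)*b = (i+1)*(m1+2) := by
    rw [← Nat.mul_add, hBb]
  have e3 : i*(m1+2) + jv*(m1+2) = k*(m1+2) := by
    rw [← Nat.add_mul, hij]
  have key : (jv+1)*a + (i+1)*b ≤ k+(m1+2)+1 := by linarith
  have p1 : a + jv ≤ a*jv + 1 := nat_prod_aux a jv ha1 hjv1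
  have p2 : b + i ≤ b*i + 1 := nat_prod_aux b i hb1 hi1
  linarith [key, p1, p2, hab]

lemma endgame (k m1 : ℕ) (hk : 1 ≤ k) (alpha beta : Fin (k+1) → ℕ)
    (haU : ∀ t, alpha t ≤ m1 + 2) (haM : Antitone alpha)
    (hbU : ∀ t, beta t ≤ m1 + 2) (hbM : Antitone beta)
    (hcod : 2*((k+1)*(m1+2)) ≤ k+(m1+2)+1 + (∑ t, alpha t + ∑ t, beta t))
    (hAB : alpha ⟨0, Nat.succ_pos k⟩ + beta ⟨k, Nat.lt_succ_self k⟩ < m1 + 2) :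
    (alpha = fun _ => m1+1) ∧ (beta = fun t : Fin (k+1) => if (t:ℕ) = k then 0 else m1+2) := by
  have hSa : ∑ t, alpha t ≤ 0 * (m1+2) + (k+1-0) * alpha ⟨0, Nat.succ_pos k⟩ :=
    sum_le_aux (m1+2) alpha haU haM 0 (Nat.succ_pos k)
  have hSb : ∑ t, beta t ≤ k * (m1+2) + (k+1-k) * beta ⟨k, Nat.lt_succ_self k⟩ :=
    sum_le_aux (m1+2) beta hbU hbM k (Nat.lt_succ_self k)
  rw [Nat.zero_mul, Nat.zero_add, Nat.sub_zero] at hSa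
  rw [show k+1-k = 1 by omega, Nat.one_mul] at hSb
  have arith1 : ∀ A B Sa Sb : ℕ, Sa ≤ (k+1)*A → Sb ≤ k*(m1+2)+B →
      2*((k+1)*(m1+2)) ≤ k+(m1+2)+1+(Sa+Sb) → A+B < m1+2 →
      A = m1+1 ∧ B = 0 := by
    intro A B Sa Sb h1 h2 h3 h4
    have step1 : k*(m1+1) ≤ k*A := by nlinarith
    have hA : m1+1 ≤ A := Nat.le_of_mul_le_mul_left step1 hk
    omega
  obtain ⟨hAeq, hBeq⟩ := arith1 _ _ _ _ hSa hSb hcod hAB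
  have haBd : ∀ t, alpha t ≤ m1+1 := fun t => by
    have h := haM (show (⟨0, Nat.succ_pos k⟩ : Fin (k+1)) ≤ t from
      Fin.mk_le_of_le_val (Nat.zero_le _))
    omega
  have hSa2 : ∑ t, alpha t ≤ (k+1)*(m1+1) := by
    calc ∑ t, alpha t ≤ ∑ _t : Fin (k+1), (m1+1) := Finset.sum_le_sum (fun t _ => haBd t)
    _ = (k+1)*(m1+1) := by simp [Finset.sum_const, Finset.card_univ]
  have hSb2 : ∑ t, beta t ≤ k*(m1+2) := by omega
  have arith2 : ∀ Sa Sb : ℕ, Sa ≤ (k+1)*(m1+1) → Sb ≤ k*(m1+2) →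
      2*((k+1)*(m1+2)) ≤ k+(m1+2)+1+(Sa+Sb) →
      (k+1)*(m1+1) ≤ Sa ∧ k*(m1+2) ≤ Sb := by
    intro Sa Sb h1 h2 h3
    constructor <;> nlinarith
  obtain ⟨hSa3, hSb3⟩ := arith2 _ _ hSa2 hSb2 hcod
  constructor
  · funext t
    exact all_eq_of_sum Finset.univ alpha (m1+1) (fun t _ => haBd t)
      (by simpa [Finset.card_univ] using hSa3) t (Finset.mem_univ t)
  · have hkmem : (⟨k, Nat.lt_succ_self k⟩ : Fin (k+1)) ∈ Finset.univ := Finset.mem_univ _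
    have hsum_erase :
        beta ⟨k, Nat.lt_succ_self k⟩ + ∑ t ∈ Finset.univ.erase ⟨k, Nat.lt_succ_self k⟩, beta t
          = ∑ t, beta t := Finset.add_sum_erase Finset.univ beta hkmem
    have hcard : (Finset.univ.erase (⟨k, Nat.lt_succ_self k⟩ : Fin (k+1))).card = k := by
      rw [Finset.card_erase_of_mem hkmem, Finset.card_univ]
      simp
    have hall := all_eq_of_sum (Finset.univ.erase ⟨k, Nat.lt_succ_self k⟩) beta (m1+2)
      (fun t _ => hbU t) (by rw [hcard]; omega)
    funext t
    by_cases ht : (t:ℕ) = k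
    · have heq : t = ⟨k, Nat.lt_succ_self k⟩ := Fin.ext ht
      rw [if_pos ht, heq]
      exact hBeq
    · rw [if_neg ht]
      exact hall t (Finset.mem_erase.mpr ⟨fun h => ht (by rw [h]), Finset.mem_univ t⟩)

/-- Theorem 3.1 in combinatorial form: for partitions `α, β` in the
`(k+1) × (n-k)` box whose associated Schubert varieties in `G(k,n)` have
codimensions summing to at most `n+1`, the containment `α∨ ≤ β` fails (i.e.
the product of the two Schubert classes vanishes, by the Richardson criterion)
iff `{α, β} = {(n-k-1,…,n-k-1), (n-k,…,n-k,0)} = {λ_{I_H}, λ_{I_p}}`. -/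
theorem schubert_md_pair (n k : ℕ) (hk : 1 ≤ k) (hkn : k + 2 ≤ n)
    (alpha beta : Fin (k + 1) → ℕ)
    (halpha : IsBoxPartition n k alpha) (hbeta : IsBoxPartition n k beta)
    (hcodim : ((k + 1) * (n - k) - ∑ i, alpha i) +
        ((k + 1) * (n - k) - ∑ i, beta i) ≤ n + 1) :
    (¬ ∀ i, boxDual n k alpha i ≤ beta i) ↔
      ((alpha = fun _ => n - k - 1) ∧
        (beta = fun i : Fin (k + 1) => if (i : ℕ) = k then 0 else n - k)) ∨
      ((alpha = fun i : Fin (k + 1) => if (i : ℕ) = k then 0 else n - k) ∧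
        (beta = fun _ => n - k - 1)) := by
  obtain ⟨haU, haM⟩ := halpha
  obtain ⟨hbU, hbM⟩ := hbeta
  obtain ⟨m1, hm1⟩ : ∃ m1, n - k = m1 + 2 := ⟨n - k - 2, by omega⟩
  have hn : n = k + (m1 + 2) := by omega
  simp only [boxDual, hm1] at haU hbU hcodim ⊢
  simp only [show m1 + 2 - 1 = m1 + 1 from rfl]
  have hSaU : ∑ t, alpha t ≤ (k+1)*(m1+2) := by
    calc ∑ t, alpha t ≤ ∑ _t : Fin (k+1), (m1+2) := Finset.sum_le_sum (fun t _ => haU t)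
    _ = (k+1)*(m1+2) := by simp [Finset.sum_const, Finset.card_univ]
  have hSbU : ∑ t, beta t ≤ (k+1)*(m1+2) := by
    calc ∑ t, beta t ≤ ∑ _t : Fin (k+1), (m1+2) := Finset.sum_le_sum (fun t _ => hbU t)
    _ = (k+1)*(m1+2) := by simp [Finset.sum_const, Finset.card_univ]
  have hcod : 2*((k+1)*(m1+2)) ≤ k+(m1+2)+1 + (∑ t, alpha t + ∑ t, beta t) := by
    have harith : ∀ P Sa Sb : ℕ, Sa ≤ P → Sb ≤ P → (P - Sa) + (P - Sb) ≤ n+1 →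
        2*P ≤ n+1+(Sa+Sb) := by intro P Sa Sb h1 h2 h3; omega
    have h := harith _ _ _ hSaU hSbU hcodim
    rw [hn] at h
    linarith
  constructor
  · intro hne
    push_neg at hne
    obtain ⟨j, hj⟩ := hne
    have hjk : (j:ℕ) ≤ k := Nat.lt_succ_iff.mp j.isLt
    have hiN : k - (j:ℕ) < k+1 := by omega
    have hj' : beta j < m1 + 2 - alpha ⟨k - (j:ℕ), hiN⟩ := hj
    have hAB : alpha ⟨k - (j:ℕ), hiN⟩ + beta j < m1+2 := by
      have := haU ⟨k - (j:ℕ), hiN⟩; omega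
    have hSa := sum_le_aux (m1+2) alpha haU haM (k - (j:ℕ)) hiN
    have hSb : ∑ t, beta t ≤ (j:ℕ) * (m1+2) + (k+1-(j:ℕ)) * beta j :=
      sum_le_aux (m1+2) beta hbU hbM (j:ℕ) j.isLt
    rw [show k+1-(k-(j:ℕ)) = (j:ℕ)+1 by omega] at hSa
    rw [show k+1-(j:ℕ) = (k-(j:ℕ))+1 by omega] at hSb
    have hdi : (j:ℕ) = k ∨ (j:ℕ) = 0 := by
      by_contra hcon
      push_neg at hcon
      obtain ⟨hj1, hj2⟩ := hcon
      exact dichotomy_aux k m1 (k - (j:ℕ)) (j:ℕ) (alpha ⟨k - (j:ℕ), hiN⟩) (beta j)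
        (∑ t, alpha t) (∑ t, beta t)
        (m1+2 - alpha ⟨k - (j:ℕ), hiN⟩) (m1+2 - beta j)
        (by omega) (by omega) (by omega) hSa hSb hcod
        (by have := haU ⟨k - (j:ℕ), hiN⟩; omega)
        (by have := hbU j; omega) hAB
    rcases hdi with hdk | hd0
    · left
      have h1 : (⟨k - (j:ℕ), hiN⟩ : Fin (k+1)) = ⟨0, Nat.succ_pos k⟩ := by
        apply Fin.ext; simp only [Fin.val_mk]; omega
      have h2 : j = ⟨k, Nat.lt_succ_self k⟩ := Fin.ext hdk
      rw [h1, h2] at hAB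
      exact endgame k m1 hk alpha beta haU haM hbU hbM hcod hAB
    · right
      have h1 : (⟨k - (j:ℕ), hiN⟩ : Fin (k+1)) = ⟨k, Nat.lt_succ_self k⟩ := by
        apply Fin.ext; simp only [Fin.val_mk]; omega
      have h2 : j = ⟨0, Nat.succ_pos k⟩ := Fin.ext hd0
      rw [h1, h2] at hAB
      have hcod' : 2*((k+1)*(m1+2)) ≤ k+(m1+2)+1 + (∑ t, beta t + ∑ t, alpha t) := by
        linarith
      have hres := endgame k m1 hk beta alpha hbU hbM haU haM hcod' (by omega)
      exact ⟨hres.2, hres.1⟩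
  · rintro (⟨ha, hb⟩ | ⟨ha, hb⟩) hall
    · subst ha; subst hb
      have h := hall ⟨k, Nat.lt_succ_self k⟩
      simp at h
    · subst ha; subst hb
      have h := hall ⟨0, Nat.succ_pos k⟩
      simp at h
end
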